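/- Let R be a complete DVR of mixed characteristic (0,p) with infinite residue field k. Then the additive group Γ = (k, +) is not Tannakian over R: there exists a representation of Γ on a finite-dimensional k-vector space (viewed as an R-module killed by π) admitting no equivariant surjection from a representation of Γ on a finitely generated free R-module. -/

import Mathlib

set_option synthInstance.maxHeartbeats 1000000
set_option maxHeartbeats 2000000

section Aux

lemma field_pow_roots_finite {F : Type*} [Field F] {p : ℕ} (hp : 0 < p) :
    {x : F | x ^ p = 1}.Finite := by
  have h0 : (Polynomial.X ^ p - 1 : Polynomial F) ≠ 0 := by
    simpa using Polynomial.X_pow_sub_C_ne_zero hp (1 : F)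
  apply Set.Finite.subset (Polynomial.finite_setOf_isRoot h0)
  intro x hx
  simp [Polynomial.IsRoot, sub_eq_zero, hx.out]

lemma artinian_pow_roots_finite {B : Type*} [CommRing B] [IsArtinianRing B] {p : ℕ}
    (hp : 0 < p) (hu : IsUnit (p : B)) : {b : B | b ^ p = 1}.Finite := by
  classical
  letI := (IsArtinianRing.setOfPred_isMaximal_finite B).to_subtype
  letI := IsArtinianRing.fieldOfSubtypeIsMaximal B
  set q : B →+* B ⧸ nilradical B := Ideal.Quotient.mk (nilradical B) with hq
  have hfin : {x : B ⧸ nilradical B | x ^ p = 1}.Finite := by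
    set e := IsArtinianRing.quotNilradicalEquivPi B
    have hinjOn : Set.InjOn e {x : B ⧸ nilradical B | x ^ p = 1} := fun a _ b _ h => e.injective h
    apply Set.Finite.of_finite_image ?_ hinjOn
    refine Set.Finite.subset (Set.Finite.pi
      (t := fun I : MaximalSpectrum B => {x : B ⧸ I.asIdeal | x ^ p = 1})
      (fun I => field_pow_roots_finite hp)) ?_
    rintro _ ⟨x, hx, rfl⟩
    intro I _
    have hxp : (e x) ^ p = 1 := by rw [← map_pow, hx.out, map_one]
    exact congrFun hxp I
  have hinj : Set.InjOn q {b : B | b ^ p = 1} := by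
    rintro a ha b hb hab
    have hbu : b * b ^ (p - 1) = 1 := by
      rw [← pow_succ', Nat.sub_add_cancel hp]; exact hb.out
    set u := a * b ^ (p - 1) with hu_def
    have hup : u ^ p = 1 := by
      rw [hu_def, mul_pow, ← pow_mul, mul_comm (p-1) p, pow_mul, hb.out, one_pow, mul_one, ha.out]
    have hqu : q u = 1 := by
      rw [hu_def, map_mul, map_pow, hab, ← map_pow, ← map_mul, hbu, map_one]
    have hnil : IsNilpotent (u - 1) := by
      rw [← mem_nilradical, ← Ideal.Quotient.eq_zero_iff_mem (I := nilradical B), map_sub,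
        hqu, map_one, sub_self]
    set n := u - 1 with hn_def
    have hu1 : u = n + 1 := by rw [hn_def]; ring
    set s := ∑ i ∈ Finset.range p, u ^ i with hs_def
    have hsn : s * n = 0 := by
      rw [hn_def, geom_sum_mul, hup, sub_self]
    set t := ∑ i ∈ Finset.range p, ∑ j ∈ Finset.range i, u ^ j with ht_def
    have hst : s = (p : B) + t * n := by
      have key : ∀ i, (∑ j ∈ Finset.range i, u ^ j) * n = u ^ i - 1 := by
        intro i; rw [hn_def, geom_sum_mul]
      have : s - (p : B) = t * n := by
        rw [hs_def, ht_def, Finset.sum_mul]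
        simp_rw [key]
        rw [Finset.sum_sub_distrib, Finset.sum_const, Finset.card_range, nsmul_eq_mul, mul_one]
      linear_combination this
    have hsu : IsUnit s := by
      rw [hst]
      exact IsNilpotent.isUnit_add_left_of_commute ((Commute.all t n).isNilpotent_mul_left hnil)
        hu (Commute.all _ _)
    have hn0 : n = 0 := by
      obtain ⟨v, hv⟩ := hsu
      have := congrArg (fun x => (↑v⁻¹ : B) * x) hsn
      simpa [← hv, ← mul_assoc] using this
    have hu_eq : u = 1 := by rw [hu1, hn0, zero_add]
    calc a = a * (b * b ^ (p-1)) := by rw [hbu, mul_one]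
    _ = u * b := by rw [hu_def]; ring
    _ = b := by rw [hu_eq, one_mul]
  exact Set.Finite.of_finite_image (hfin.subset (by
    rintro _ ⟨x, hx, rfl⟩; rw [Set.mem_setOf_eq, ← map_pow, hx.out, map_one])) hinj

lemma no_injective_commuting_exponent_rep {K : Type*} [Field K] [CharZero K]
    {n : Type*} [Fintype n] [DecidableEq n] {p : ℕ} (hp : 0 < p)
    {Γ : Type*} [Group Γ] [Infinite Γ] (τ : Γ →* Matrix n n K)
    (hinj : Function.Injective τ)
    (hcomm : ∀ a b : Γ, τ a * τ b = τ b * τ a)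
    (hper : ∀ γ : Γ, τ γ ^ p = 1) : False := by
  classical
  let A : Subalgebra K (Matrix n n K) := Algebra.adjoin K (Set.range τ)
  haveI hfd : FiniteDimensional K A := inferInstance
  haveI hart : IsArtinian K A := inferInstance
  letI : CommRing A := Algebra.adjoinCommRingOfComm (R := K) (by
    rintro _ ⟨a, rfl⟩ _ ⟨b, rfl⟩; exact hcomm a b)
  haveI : IsArtinianRing A := isArtinian_of_tower K hart
  have hu : IsUnit ((p : ℕ) : A) := by
    have h1 : ((p : ℕ) : A) = algebraMap K A ((p : ℕ) : K) := by rw [map_natCast]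
    rw [h1]
    exact (isUnit_iff_ne_zero.mpr (by exact_mod_cast hp.ne')).map _
  have coe_pow : ∀ (x : A) (m : ℕ), ((x ^ m : A) : Matrix n n K) = (x : Matrix n n K) ^ m := by
    intro x m
    induction m with
    | zero => rfl
    | succ m ih => rw [pow_succ, pow_succ, ← ih]; rfl
  have hmem : ∀ γ : Γ, (⟨τ γ, Algebra.subset_adjoin (Set.mem_range_self γ)⟩ : A) ^ p = 1 := by
    intro γ
    apply Subtype.ext
    rw [coe_pow]
    exact hper γ
  have hfin : {a : A | a ^ p = 1}.Finite := artinian_pow_roots_finite hp hu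
  let G : Γ → {a : A | a ^ p = 1} := fun γ =>
    ⟨⟨τ γ, Algebra.subset_adjoin (Set.mem_range_self γ)⟩, hmem γ⟩
  have hGinj : Function.Injective G := by
    intro a b h
    exact hinj (congrArg (fun x => (x.1 : Matrix n n K)) h)
  haveI : Finite {a : A | a ^ p = 1} := hfin.to_subtype
  haveI := Finite.of_injective G hGinj
  exact not_finite Γ

/-- The shear representation `c ↦ [[1,c],[0,1]]` on `k × k`. -/
def shear {k : Type} [CommRing k] (c : k) : (k × k) →ₗ[k] (k × k) where
  toFun v := (v.1 + c * v.2, v.2)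
  map_add' u v := by ext <;> simp <;> ring
  map_smul' r v := by ext <;> simp <;> ring

def shearRep (R k : Type) [CommRing R] [CommRing k] [Algebra R k] :
    Representation R (Multiplicative k) (k × k) where
  toFun γ := (shear (Multiplicative.toAdd γ)).restrictScalars R
  map_one' := by
    refine LinearMap.ext fun v => ?_
    simp [shear]
  map_mul' γ₁ γ₂ := by
    refine LinearMap.ext fun v => ?_
    simp [shear, Module.End.mul_apply]
    ring

end Aux

/-- A weak lift of a representation `ρ` of the abstract group `Γ` on the `R`-module `V`. -/
structure WeakLift (R Γ : Type) [CommRing R] [Group Γ] (V : Type) [AddCommGroup V]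
    [Module R V] (ρ : Representation R Γ V) where
  W : Type
  [instAddCommGroup : AddCommGroup W]
  [instModule : Module R W]
  finite : Module.Finite R W
  free : Module.Free R W
  σ : Representation R Γ W
  f : W →ₗ[R] V
  surjective : Function.Surjective f
  equivariant : ∀ γ : Γ, f ∘ₗ σ γ = ρ γ ∘ₗ f

/-- A representation of `Γ` on a finitely generated `R`-module killed by `π`
admitting no weak lift. -/
structure NonLiftableRep (R Γ : Type) [CommRing R] [Group Γ] (π : R) where
  V : Type
  [instAddCommGroup : AddCommGroup V]
  [instModule : Module R V]
  finite : Module.Finite R V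
  killed : ∀ v : V, π • v = 0
  ρ : Representation R Γ V
  noWeakLift : ¬ Nonempty (WeakLift R Γ V ρ)



/-- Over a complete DVR of mixed characteristic `(0, p)` with infinite residue field `k`,
the additive group `Γ = (k, +)` is not Tannakian: it has a representation on a
finite-dimensional `k`-vector space admitting no equivariant surjection from a
representation on a finitely generated free `R`-module. -/
theorem stmt6 {R : Type} [CommRing R] [IsDomain R] [IsDiscreteValuationRing R]
    (π : R) (hπ : Irreducible π)
    [IsAdicComplete (IsLocalRing.maximalIdeal R) R]
    [CharZero R] (p : ℕ) (hp : p.Prime) [CharP (IsLocalRing.ResidueField R) p]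
    [Infinite (IsLocalRing.ResidueField R)] :
    Nonempty (NonLiftableRep R (Multiplicative (IsLocalRing.ResidueField R)) π) := by
  classical
  set k := IsLocalRing.ResidueField R with hk
  set Γ := Multiplicative k with hΓ
  -- the residue of π vanishes
  have hres : algebraMap R k π = 0 := by
    rw [IsLocalRing.ResidueField.algebraMap_eq]
    exact Ideal.Quotient.eq_zero_iff_mem.mpr ((IsLocalRing.mem_maximalIdeal π).mpr hπ.not_isUnit)
  have hkilled : ∀ v : k × k, π • v = 0 := by
    rintro ⟨x, y⟩
    rw [Prod.smul_mk]
    rw [Algebra.smul_def, Algebra.smul_def, hres, zero_mul, zero_mul]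
    rfl
  haveI hfink : Module.Finite R k :=
    Module.Finite.of_surjective (Algebra.linearMap R k) Ideal.Quotient.mk_surjective
  have hfinV : Module.Finite R (k × k) := inferInstance
  -- injectivity of the shear representation
  have hρinj : Function.Injective (shearRep R k) := by
    intro γ₁ γ₂ h
    have := congrArg (fun (f : (k × k) →ₗ[R] (k × k)) => (f ((0 : k), (1 : k))).1) h
    simp [shearRep, shear] at this
    exact Multiplicative.toAdd.injective this
  refine ⟨⟨k × k, hfinV, hkilled, shearRep R k, ?_⟩⟩
  rintro ⟨L⟩
  letI := L.instAddCommGroup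
  letI := L.instModule
  haveI := L.finite
  haveI := L.free
  -- σ is injective
  have hσinj : Function.Injective L.σ := by
    intro γ₁ γ₂ h
    apply hρinj
    refine LinearMap.ext fun v => ?_
    obtain ⟨w, rfl⟩ := L.surjective v
    have e₁ := congrFun (congrArg DFunLike.coe (L.equivariant γ₁)) w
    have e₂ := congrFun (congrArg DFunLike.coe (L.equivariant γ₂)) w
    simp only [LinearMap.comp_apply] at e₁ e₂
    rw [← e₁, ← e₂, h]
  -- exponent p
  have hγp : ∀ γ : Γ, γ ^ p = 1 := by
    intro γ
    apply Multiplicative.toAdd.injective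
    rw [toAdd_pow, toAdd_one, nsmul_eq_mul, CharP.cast_eq_zero k p, zero_mul]
  -- move to matrices over the fraction field
  set K := FractionRing R with hK
  haveI : CharZero K := charZero_of_injective_algebraMap (IsFractionRing.injective R K)
  set ι := Module.Free.ChooseBasisIndex R L.W with hι
  set b := Module.Free.chooseBasis R L.W with hb
  set e : (L.W →ₗ[R] L.W) ≃ₐ[R] Matrix ι ι R := LinearMap.toMatrixAlgEquiv b with he
  set mp : Matrix ι ι R →+* Matrix ι ι K := (algebraMap R K).mapMatrix with hmp
  have hmpinj : Function.Injective mp := by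
    intro M N h
    ext i j
    apply IsFractionRing.injective R K
    have := congrFun (congrFun (congrArg (fun M : Matrix ι ι K => (M : ι → ι → K)) h) i) j
    simpa [hmp, RingHom.mapMatrix_apply, Matrix.map_apply] using this
  set τ : Γ →* Matrix ι ι K :=
    (mp.toMonoidHom.comp e.toAlgHom.toRingHom.toMonoidHom).comp L.σ with hτ
  have hτinj : Function.Injective τ := by
    intro γ₁ γ₂ h
    exact hσinj (e.injective (hmpinj h))
  have hτcomm : ∀ a b : Γ, τ a * τ b = τ b * τ a := by
    intro a b
    rw [← map_mul, ← map_mul, mul_comm]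
  have hτper : ∀ γ : Γ, τ γ ^ p = 1 := by
    intro γ
    rw [← map_pow, hγp, map_one]
  exact no_injective_commuting_exponent_rep hp.pos τ hτinj hτcomm hτper
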